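/- Let k ≥ 2, let M be a symmetric k×k matrix over the field ℤ/2 (arbitrary diagonal, the diagonal entries encoding framings of chords), and let α ≠ β be two indices. Let A be the matrix M with its (α,β) and (β,α) entries set to 1, and B the matrix M with those entries set to 0. Let E = 1 + e_{βα} (the identity matrix plus the matrix unit with a single 1 in position (β,α)), let N = E·A·Eᵀ, let C be the matrix N with its (α,β) and (β,α) entries set to 1, and D the matrix N with those entries set to 0. Then the genus generating polynomials satisfy the generalized four-term relation F_A − F_B = (−1)^m · (F_C − F_D), where m ∈ {0,1} is the diagonal entry M_{αα} regarded as an integer. (This is the generalized four-term relation for framed chord diagrams: when the chord α is negative, the chord β changes its framing in passing from A, B to C, D — as N_{ββ} = M_{ββ} + M_{αα} — and the right-hand side changes overall sign.) -/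

import Mathlib

open Matrix

/-- The corank over `ℤ/2` of the principal submatrix of `N` on the rows and columns in `I`:
`|I| - rank N_I`. -/
noncomputable def subCorank {V : Type*} [Fintype V] [DecidableEq V]
    (N : Matrix V V (ZMod 2)) (I : Finset V) : ℕ :=
  I.card - (N.submatrix (fun i : I => (i : V)) fun i : I => (i : V)).rank

/-- The genus generating polynomial of a symmetric matrix `N` over `ℤ/2`
(with integer coefficients, so that signed differences make sense):
`F_N(x) = Σ_{I ⊆ V} x ^ (corank N_I + corank N_{V∖I})`. -/
noncomputable def genusPoly {V : Type*} [Fintype V] [DecidableEq V]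
    (N : Matrix V V (ZMod 2)) : Polynomial ℤ :=
  ∑ I : Finset V, Polynomial.X ^ (subCorank N I + subCorank N Iᶜ)

/-- The matrix `M` with its `(α, β)` and `(β, α)` entries replaced by `v`. -/
def setSym {V : Type*} [DecidableEq V] (M : Matrix V V (ZMod 2)) (α β : V) (v : ZMod 2) :
    Matrix V V (ZMod 2) := fun i j =>
  if (i = α ∧ j = β) ∨ (i = β ∧ j = α) then v else M i j

section Aux
variable {W : Type*} [Fintype W] [DecidableEq W]

lemma stdBasis_transpose (a b : W) :
    (Matrix.single b a (1 : ZMod 2))ᵀ = Matrix.single a b 1 := by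
  ext i j
  simp [Matrix.single, and_comm]

lemma conj_apply (a b : W) (X : Matrix W W (ZMod 2)) (i j : W) :
    ((((1 : Matrix W W (ZMod 2)) + Matrix.single b a 1) * X *
      ((1 : Matrix W W (ZMod 2)) + Matrix.single b a 1)ᵀ : Matrix W W (ZMod 2))) i j =
    X i j + (if i = b then X a j else 0) + (if j = b then X i a else 0) +
      (if i = b ∧ j = b then X a a else 0) := by
  have h1 : ∀ (Y : Matrix W W (ZMod 2)) (i j : W),
      (Matrix.single b a (1 : ZMod 2) * Y) i j = if i = b then Y a j else 0 := by
    intro Y i j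
    by_cases h : i = b
    · subst h; simp
    · simp [Matrix.single_mul_apply_of_ne (h := h) , h]
  have h2 : ∀ (Y : Matrix W W (ZMod 2)) (i j : W),
      (Y * Matrix.single a b (1 : ZMod 2)) i j = if j = b then Y i a else 0 := by
    intro Y i j
    by_cases h : j = b
    · subst h; simp
    · simp [Matrix.mul_single_apply_of_ne (hbj := h), h]
  rw [Matrix.transpose_add, Matrix.transpose_one, stdBasis_transpose]
  rw [add_mul, one_mul, mul_add, mul_one]
  simp only [Matrix.add_apply, h2, h1, Matrix.add_apply]
  by_cases hib : i = b <;> by_cases hjb : j = b <;> simp [hib, hjb] <;> ring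

lemma conj_self_eq_one (a b : W) (hab : a ≠ b) :
    (((1 : Matrix W W (ZMod 2)) + Matrix.single b a 1) *
      ((1 : Matrix W W (ZMod 2)) + Matrix.single b a 1)) = 1 := by
  have h0 : Matrix.single b a (1 : ZMod 2) * Matrix.single b a 1 = 0 :=
    Matrix.single_mul_single_of_ne (1 : ZMod 2) b a b hab (1 : ZMod 2)
  have h2 : Matrix.single b a (1 : ZMod 2) + Matrix.single b a 1 = 0 := by
    ext i j
    simp only [Matrix.add_apply, Matrix.zero_apply]
    exact CharTwo.add_self_eq_zero _
  calc ((1 : Matrix W W (ZMod 2)) + Matrix.single b a 1) *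
      ((1 : Matrix W W (ZMod 2)) + Matrix.single b a 1)
      = 1 + (Matrix.single b a 1 + Matrix.single b a 1) +
        Matrix.single b a (1 : ZMod 2) * Matrix.single b a 1 := by noncomm_ring
    _ = 1 := by rw [h0, h2, add_zero, add_zero]

lemma conj_rank (a b : W) (hab : a ≠ b) (X : Matrix W W (ZMod 2)) :
    ((((1 : Matrix W W (ZMod 2)) + Matrix.single b a 1) * X *
      ((1 : Matrix W W (ZMod 2)) + Matrix.single b a 1)ᵀ : Matrix W W (ZMod 2))).rank
      = X.rank := by
  have hu : IsUnit (((1 : Matrix W W (ZMod 2)) + Matrix.single b a 1)).det :=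
    Matrix.isUnit_det_of_left_inverse (conj_self_eq_one a b hab)
  have hut : IsUnit ((((1 : Matrix W W (ZMod 2)) + Matrix.single b a 1))ᵀ).det := by
    rwa [Matrix.det_transpose]
  rw [Matrix.rank_mul_eq_left_of_isUnit_det _ _ hut,
    Matrix.rank_mul_eq_right_of_isUnit_det _ _ hu]

end Aux

section Main

variable {V : Type*} [Fintype V] [DecidableEq V]

lemma setSym_submatrix (M : Matrix V V (ZMod 2)) (α β : V) (v : ZMod 2) (I : Finset V)
    (h : ¬(α ∈ I ∧ β ∈ I)) :
    (setSym M α β v).submatrix (fun i : I => (i : V)) (fun i : I => (i : V)) =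
      M.submatrix (fun i : I => (i : V)) (fun i : I => (i : V)) := by
  ext i j
  simp only [Matrix.submatrix_apply, setSym]
  rw [if_neg]
  rintro (⟨h1, h2⟩ | ⟨h1, h2⟩)
  · exact h ⟨h1 ▸ i.2, h2 ▸ j.2⟩
  · exact h ⟨h2 ▸ j.2, h1 ▸ i.2⟩

lemma setSym_eq_self (N : Matrix V V (ZMod 2)) (α β : V) (v : ZMod 2)
    (h1 : N α β = v) (h2 : N β α = v) : setSym N α β v = N := by
  funext i j
  simp only [setSym]
  split
  · rename_i h
    rcases h with ⟨ha, hb⟩ | ⟨ha, hb⟩ <;> subst ha <;> subst hb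
    · exact h1.symm
    · exact h2.symm
  · rfl

lemma conj_submatrix_in (α β : V) (hαβ : α ≠ β) (X : Matrix V V (ZMod 2)) (I : Finset V)
    (hα : α ∈ I) (hβ : β ∈ I) :
    ((((1 : Matrix V V (ZMod 2)) + Matrix.single β α 1) * X *
      ((1 : Matrix V V (ZMod 2)) + Matrix.single β α 1)ᵀ : Matrix V V (ZMod 2))).submatrix
        (fun i : I => (i : V)) (fun i : I => (i : V)) =
    (((1 : Matrix I I (ZMod 2)) + Matrix.single (⟨β, hβ⟩ : I) (⟨α, hα⟩ : I) 1) *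
      (X.submatrix (fun i : I => (i : V)) (fun i : I => (i : V))) *
      ((1 : Matrix I I (ZMod 2)) + Matrix.single (⟨β, hβ⟩ : I) (⟨α, hα⟩ : I) 1)ᵀ
        : Matrix I I (ZMod 2)) := by
  ext i j
  rw [Matrix.submatrix_apply, conj_apply, conj_apply]
  simp only [Matrix.submatrix_apply]
  have hi : (i = (⟨β, hβ⟩ : I)) ↔ ((i : V) = β) := Subtype.ext_iff
  have hj : (j = (⟨β, hβ⟩ : I)) ↔ ((j : V) = β) := Subtype.ext_iff
  simp [hi, hj]

lemma conj_submatrix_out (α β : V) (X : Matrix V V (ZMod 2)) (I : Finset V)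
    (hβ : β ∉ I) :
    ((((1 : Matrix V V (ZMod 2)) + Matrix.single β α 1) * X *
      ((1 : Matrix V V (ZMod 2)) + Matrix.single β α 1)ᵀ : Matrix V V (ZMod 2))).submatrix
        (fun i : I => (i : V)) (fun i : I => (i : V)) =
    X.submatrix (fun i : I => (i : V)) (fun i : I => (i : V)) := by
  ext i j
  rw [Matrix.submatrix_apply, conj_apply]
  have hi : ¬((i : V) = β) := fun h => hβ (h ▸ i.2)
  have hj : ¬((j : V) = β) := fun h => hβ (h ▸ j.2)
  simp [hi, hj]

lemma conj_subCorank (α β : V) (hαβ : α ≠ β) (X : Matrix V V (ZMod 2)) (I : Finset V)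
    (h : α ∈ I ↔ β ∈ I) :
    subCorank ((((1 : Matrix V V (ZMod 2)) + Matrix.single β α 1) * X *
      ((1 : Matrix V V (ZMod 2)) + Matrix.single β α 1)ᵀ : Matrix V V (ZMod 2))) I =
    subCorank X I := by
  by_cases hα : α ∈ I
  · have hβ : β ∈ I := h.mp hα
    unfold subCorank
    rw [conj_submatrix_in α β hαβ X I hα hβ, conj_rank]
    exact fun he => hαβ (congrArg Subtype.val he)
  · have hβ : β ∉ I := fun hb => hα (h.mpr hb)
    unfold subCorank
    rw [conj_submatrix_out α β X I hβ]

end Main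

/-- **The generalized four-term relation for the genus generating polynomial of framed
chord diagrams.**  Let `M` be a symmetric `k × k` matrix over `ℤ/2` (`k ≥ 2`, arbitrary
diagonal encoding the framings), `α ≠ β` two indices, `A` the matrix `M` with its
`(α,β)`, `(β,α)` entries set to `1`, `B` the matrix `M` with those entries set to `0`,
`E = 1 + e_{βα}`, `N = E·A·Eᵀ`, `C` the matrix `N` with its `(α,β)`, `(β,α)` entries set
to `1` and `D` the matrix `N` with those entries set to `0`.  Then
`F_A - F_B = (-1) ^ m · (F_C - F_D)`, where `m ∈ {0, 1}` is the diagonal entry `M α α`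
regarded as an integer. -/
theorem genusPoly_generalized_four_term (k : ℕ) (hk : 2 ≤ k)
    (M : Matrix (Fin k) (Fin k) (ZMod 2)) (hM : M.IsSymm)
    (α β : Fin k) (hαβ : α ≠ β) :
    let A := setSym M α β 1
    let B := setSym M α β 0
    let E := (1 : Matrix (Fin k) (Fin k) (ZMod 2)) + Matrix.single β α 1
    let N := E * A * Eᵀ
    let C := setSym N α β 1
    let D := setSym N α β 0
    genusPoly A - genusPoly B = (-1 : ℤ) ^ (M α α).val • (genusPoly C - genusPoly D) := by
  intro A B E N C D
  have hA : A = setSym M α β 1 := rfl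
  have hB : B = setSym M α β 0 := rfl
  have hN : N = E * A * Eᵀ := rfl
  have hE : E = (1 : Matrix (Fin k) (Fin k) (ZMod 2)) + Matrix.single β α 1 := rfl
  -- entries of A and B
  have hAentry : ∀ i j, A i j = if (i = α ∧ j = β) ∨ (i = β ∧ j = α) then 1 else M i j :=
    fun i j => rfl
  have hBentry : ∀ i j, B i j = if (i = α ∧ j = β) ∨ (i = β ∧ j = α) then 0 else M i j :=
    fun i j => rfl
  have hNentry : ∀ i j, N i j = A i j + (if i = β then A α j else 0) +
      (if j = β then A i α else 0) + (if i = β ∧ j = β then A α α else 0) :=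
    fun i j => conj_apply α β A i j
  have hz : ∀ x : ZMod 2, x = 0 ∨ x = 1 := by decide
  have hm2 := hz (M α α)
  have h11 : (1 : ZMod 2) + 1 = 0 := rfl
  have key : ∀ (X : Matrix (Fin k) (Fin k) (ZMod 2)) (I : Finset (Fin k)),
      (α ∈ I ↔ β ∈ I) → subCorank (E * X * Eᵀ) I = subCorank X I :=
    fun X I h => conj_subCorank α β hαβ X I h
  have hcompl : ∀ I : Finset (Fin k), (α ∈ I ↔ β ∈ I) → (α ∈ Iᶜ ↔ β ∈ Iᶜ) := by
    intro I h
    simp [Finset.mem_compl, h]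
  unfold genusPoly
  rw [← Finset.sum_sub_distrib, ← Finset.sum_sub_distrib, Finset.smul_sum]
  refine Finset.sum_congr rfl fun I _ => ?_
  by_cases hsep : (α ∈ I ↔ β ∈ I)
  · have hsepc := hcompl I hsep
    rcases hm2 with hm | hm
    · -- the chord α is positive
      have hval : (M α α).val = 0 := by rw [hm]; rfl
      have hNαβ : N α β = 1 := by
        rw [hNentry]
        simp [hAentry, hαβ, hαβ.symm, hm]
      have hNβα : N β α = 1 := by
        rw [hNentry]
        simp [hAentry, hαβ, hαβ.symm, hm]
      have hC : C = N := setSym_eq_self N α β 1 hNαβ hNβα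
      have hD : D = E * B * Eᵀ := by
        funext i j
        have hd : D i j = if (i = α ∧ j = β) ∨ (i = β ∧ j = α) then 0 else N i j := rfl
        rw [hd, hNentry, conj_apply α β B i j]
        simp only [hAentry, hBentry]
        by_cases h1 : i = α <;> by_cases h2 : i = β <;> by_cases h3 : j = α <;>
          by_cases h4 : j = β <;>
          simp_all [hαβ, hαβ.symm, hm] <;> ring_nf <;> simp [h11, hm] <;> decide
      have e1 : subCorank C I = subCorank A I := by rw [hC, hN]; exact key A I hsep
      have e2 : subCorank C Iᶜ = subCorank A Iᶜ := by rw [hC, hN]; exact key A Iᶜ hsepc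
      have e3 : subCorank D I = subCorank B I := by rw [hD]; exact key B I hsep
      have e4 : subCorank D Iᶜ = subCorank B Iᶜ := by rw [hD]; exact key B Iᶜ hsepc
      rw [e1, e2, e3, e4, hval, pow_zero, one_smul]
    · -- the chord α is negative
      have hval : (M α α).val = 1 := by rw [hm]; rfl
      have hNαβ : N α β = 0 := by
        rw [hNentry]
        simp [hAentry, hαβ, hαβ.symm, hm, h11]
      have hNβα : N β α = 0 := by
        rw [hNentry]
        simp [hAentry, hαβ, hαβ.symm, hm, h11]
      have hD : D = N := setSym_eq_self N α β 0 hNαβ hNβα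
      have hC : C = E * B * Eᵀ := by
        funext i j
        have hc : C i j = if (i = α ∧ j = β) ∨ (i = β ∧ j = α) then 1 else N i j := rfl
        rw [hc, hNentry, conj_apply α β B i j]
        simp only [hAentry, hBentry]
        by_cases h1 : i = α <;> by_cases h2 : i = β <;> by_cases h3 : j = α <;>
          by_cases h4 : j = β <;>
          simp_all [hαβ, hαβ.symm, hm] <;> ring_nf <;> simp [h11, hm] <;> decide
      have e1 : subCorank D I = subCorank A I := by rw [hD, hN]; exact key A I hsep
      have e2 : subCorank D Iᶜ = subCorank A Iᶜ := by rw [hD, hN]; exact key A Iᶜ hsepc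
      have e3 : subCorank C I = subCorank B I := by rw [hC]; exact key B I hsep
      have e4 : subCorank C Iᶜ = subCorank B Iᶜ := by rw [hC]; exact key B Iᶜ hsepc
      rw [e1, e2, e3, e4, hval, pow_one, neg_one_smul, neg_sub]
  · -- I separates α and β: all four submatrices on I (and on Iᶜ) coincide
    have h1 : ¬(α ∈ I ∧ β ∈ I) := fun ⟨ha, hb⟩ => hsep ⟨fun _ => hb, fun _ => ha⟩
    have h2 : ¬(α ∈ Iᶜ ∧ β ∈ Iᶜ) := by
      simp only [Finset.mem_compl]
      intro ⟨ha, hb⟩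
      exact hsep ⟨fun h => absurd h ha, fun h => absurd h hb⟩
    have eAB : ∀ J : Finset (Fin k), ¬(α ∈ J ∧ β ∈ J) → subCorank A J = subCorank B J := by
      intro J hJ
      unfold subCorank
      rw [hA, hB, setSym_submatrix _ _ _ _ _ hJ, setSym_submatrix _ _ _ _ _ hJ]
    have eCD : ∀ J : Finset (Fin k), ¬(α ∈ J ∧ β ∈ J) → subCorank C J = subCorank D J := by
      intro J hJ
      unfold subCorank
      rw [show C = setSym N α β 1 from rfl, show D = setSym N α β 0 from rfl,
        setSym_submatrix _ _ _ _ _ hJ, setSym_submatrix _ _ _ _ _ hJ]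
    rw [eAB I h1, eAB Iᶜ h2, eCD I h1, eCD Iᶜ h2, sub_self, sub_self, smul_zero]
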